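/- The class FIFD of Kripke frames (finite, transitive, irreflexive, with all domains finite) does not have the fixed-point property: for the formula A(p) := ∀u □(p → P(u)), there is no sentence B containing only the predicate symbol P such that B ↔ A(B) is valid in every frame of FIFD. Concretely, for every such B there exists k such that M_k ⊭ B ↔ ∀u □(B → P(u)). -/

import Mathlib

namespace PML

/-- Formulas of predicate modal logic, with propositional variables (language L''). -/
inductive Fml : Type
  | verum : Fml
  | falsum : Fml
  | pvar (q : ℕ) : Fml
  | pred (P : ℕ) (args : List ℕ) : Fml
  | neg (A : Fml) : Fml
  | imp (A B : Fml) : Fml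
  | all (u : ℕ) (A : Fml) : Fml
  | box (A : Fml) : Fml

namespace Fml

def lor (A B : Fml) : Fml := A.neg.imp B
def land (A B : Fml) : Fml := (A.imp B.neg).neg
def iff (A B : Fml) : Fml := (A.imp B).land (B.imp A)
def ex (u : ℕ) (A : Fml) : Fml := (Fml.all u A.neg).neg
def boxdot (A : Fml) : Fml := A.box.land A

def boxIter : ℕ → Fml → Fml
  | 0, A => A
  | n + 1, A => (boxIter n A).box

/-- Free variables. -/
def free : Fml → Finset ℕ
  | pred _ args => args.toFinset
  | neg A => A.free
  | imp A B => A.free ∪ B.free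
  | all u A => A.free.erase u
  | box A => A.free
  | _ => ∅

/-- Bound variables. -/
def bound : Fml → Finset ℕ
  | neg A => A.bound
  | imp A B => A.bound ∪ B.bound
  | all u A => insert u A.bound
  | box A => A.bound
  | _ => ∅

/-- Propositional variables occurring in a formula. -/
def pvars : Fml → Finset ℕ
  | pvar q => {q}
  | neg A => A.pvars
  | imp A B => A.pvars ∪ B.pvars
  | all _ A => A.pvars
  | box A => A.pvars
  | _ => ∅

/-- Predicate symbols occurring in a formula. -/
def preds : Fml → Finset ℕ
  | pred P _ => {P}
  | neg A => A.preds
  | imp A B => A.preds ∪ B.preds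
  | all _ A => A.preds
  | box A => A.preds
  | _ => ∅

/-- Predicate symbols together with the arity they are used with. -/
def predSig : Fml → Finset (ℕ × ℕ)
  | pred P args => {(P, args.length)}
  | neg A => A.predSig
  | imp A B => A.predSig ∪ B.predSig
  | all _ A => A.predSig
  | box A => A.predSig
  | _ => ∅

/-- Rename free occurrences of the variable `u` to `v`. -/
def rename : Fml → ℕ → ℕ → Fml
  | pred P args, u, v => pred P (args.map fun x => if x = u then v else x)
  | neg A, u, v => (A.rename u v).neg
  | imp A B, u, v => (A.rename u v).imp (B.rename u v)
  | all w A, u, v => if w = u then all w A else all w (A.rename u v)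
  | box A, u, v => (A.rename u v).box
  | A, _, _ => A

/-- Substitution of a formula for a propositional variable. -/
def psub : Fml → ℕ → Fml → Fml
  | pvar q, p, B => if q = p then B else pvar q
  | neg A, p, B => (A.psub p B).neg
  | imp A C, p, B => (A.psub p B).imp (C.psub p B)
  | all u A, p, B => all u (A.psub p B)
  | box A, p, B => (A.psub p B).box
  | A, _, _ => A

/-- Simultaneous substitution of formulas for all propositional variables. -/
def msub : Fml → (ℕ → Fml) → Fml
  | pvar q, σ => σ q
  | neg A, σ => (A.msub σ).neg
  | imp A C, σ => (A.msub σ).imp (C.msub σ)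
  | all u A, σ => all u (A.msub σ)
  | box A, σ => (A.msub σ).box
  | A, _ => A

/-- Depth-indexed substitution: occurrences of `p` at modal depth `i` are replaced by `σ i`. -/
def dsub : Fml → ℕ → (ℕ → Fml) → Fml
  | pvar q, p, σ => if q = p then σ 0 else pvar q
  | neg A, p, σ => (A.dsub p σ).neg
  | imp A C, p, σ => (A.dsub p σ).imp (C.dsub p σ)
  | all u A, p, σ => all u (A.dsub p σ)
  | box A, p, σ => (A.dsub p (fun i => σ (i + 1))).box
  | A, _, _ => A

/-- `A(p)[B_0,…,B_k]` for a list `[B_0,…,B_k]`. -/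
def dsubL (A : Fml) (p : ℕ) (L : List Fml) : Fml := A.dsub p (fun i => L.getD i verum)

/-- `A^{⊤(n)}`: replace every boxed subformula at modal depth `n` by `⊤`. -/
def eraseT : ℕ → Fml → Fml
  | 0, box _ => verum
  | n + 1, box A => (eraseT n A).box
  | n, neg A => (eraseT n A).neg
  | n, imp A B => (eraseT n A).imp (eraseT n B)
  | n, all u A => all u (eraseT n A)
  | _, A => A

/-- `occursAt p A d`: the propositional variable `p` occurs in `A` at modal depth `d`. -/
def occursAt (p : ℕ) : Fml → ℕ → Prop
  | pvar q, d => q = p ∧ d = 0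
  | neg A, d => occursAt p A d
  | imp A B, d => occursAt p A d ∨ occursAt p B d
  | all _ A, d => occursAt p A d
  | box A, d => ∃ d', d = d' + 1 ∧ occursAt p A d'
  | _, _ => False

/-- `A` is modalized in `p`: no occurrence of `p` at depth `0`. -/
def Modalized (p : ℕ) (A : Fml) : Prop := ¬ occursAt p A 0

/-- Conjunction of a list of formulas. -/
def conj : List Fml → Fml
  | [] => verum
  | A :: L => A.land (conj L)

/-- The canonical fixed-point sequence:
`A_0 := A^{⊤(0)}(p)[⊤]`, `A_{k+1} := A^{⊤(k+1)}(p)[⊤, A_k, …, A_0]`. -/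
def fpSeq (p : ℕ) (A : Fml) : ℕ → Fml
  | 0 => (eraseT 0 A).dsub p (fun _ => verum)
  | n + 1 => (eraseT (n + 1) A).dsub p
      (fun i => match i with
        | 0 => verum
        | j + 1 => fpSeq p A (n - j))
  termination_by k => k
  decreasing_by omega

end Fml

open Fml

/-- Axioms of predicate logic, together with the modal distribution axiom K. -/
inductive Ax : Fml → Prop
  | imp1 (A B : Fml) : Ax (A.imp (B.imp A))
  | imp2 (A B C : Fml) : Ax ((A.imp (B.imp C)).imp ((A.imp B).imp (A.imp C)))
  | contra (A B : Fml) : Ax ((A.neg.imp B.neg).imp (B.imp A))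
  | verum : Ax Fml.verum
  | exfalso (A : Fml) : Ax (Fml.falsum.imp A)
  | negE (A : Fml) : Ax (A.neg.imp (A.imp Fml.falsum))
  | negI (A : Fml) : Ax ((A.imp Fml.falsum).imp A.neg)
  | allE (A : Fml) (u v : ℕ) (h : v ∉ A.bound) : Ax ((Fml.all u A).imp (A.rename u v))
  | allK (A B : Fml) (u : ℕ) :
      Ax ((Fml.all u (A.imp B)).imp ((Fml.all u A).imp (Fml.all u B)))
  | allV (A : Fml) (u : ℕ) (h : u ∉ A.free) : Ax (A.imp (Fml.all u A))
  | k (A B : Fml) : Ax (((A.imp B).box).imp (A.box.imp B.box))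

/-- Hilbert-style provability from the base axioms plus extra axioms `Ext`,
closed under modus ponens, necessitation and generalization. -/
inductive Prf (Ext : Fml → Prop) : Fml → Prop
  | ax {A : Fml} : Ax A → Prf Ext A
  | ext {A : Fml} : Ext A → Prf Ext A
  | mp {A B : Fml} : Prf Ext (A.imp B) → Prf Ext A → Prf Ext B
  | nec {A : Fml} : Prf Ext A → Prf Ext A.box
  | gen {A : Fml} (u : ℕ) : Prf Ext A → Prf Ext (Fml.all u A)

/-- The smallest normal predicate modal logic QK. -/
def QK : Fml → Prop := Prf (fun _ => False)

inductive Ax4 : Fml → Prop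
  | four (A : Fml) : Ax4 (A.box.imp A.box.box)

/-- QK4 : QK plus the axiom 4. -/
def QK4 : Fml → Prop := Prf Ax4

inductive AxL : Fml → Prop
  | lob (A : Fml) : AxL (((A.box.imp A).box).imp A.box)

/-- QGL : QK plus Löb's axiom. -/
def QGL : Fml → Prop := Prf AxL

/-- NQGL : QK4 plus the infinitary rule BL. -/
inductive NQGL : Fml → Prop
  | ax {A : Fml} : Ax A → NQGL A
  | four (A : Fml) : NQGL (A.box.imp A.box.box)
  | mp {A B : Fml} : NQGL (A.imp B) → NQGL A → NQGL B
  | nec {A : Fml} : NQGL A → NQGL A.box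
  | gen {A : Fml} (u : ℕ) : NQGL A → NQGL (Fml.all u A)
  | bl {A : Fml} : (∀ n : ℕ, NQGL ((boxIter (n + 1) Fml.falsum).imp A)) → NQGL A

/-- Σ-formulas. -/
inductive IsSigma : Fml → Prop
  | box (A : Fml) : IsSigma A.box
  | lor {A B : Fml} : IsSigma A → IsSigma B → IsSigma (A.lor B)
  | land {A B : Fml} : IsSigma A → IsSigma B → IsSigma (A.land B)
  | ex {A : Fml} (u : ℕ) : IsSigma A → IsSigma (Fml.ex u A)

/- ## Kripke semantics -/

structure KFrame where
  W : Type
  R : W → W → Prop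
  Dom : Type
  D : W → Set Dom
  Dne : ∀ w, (D w).Nonempty
  mono : ∀ {w w'}, R w w' → D w ⊆ D w'

structure KModel extends KFrame where
  I : W → ℕ → List Dom → Prop
  V : W → ℕ → Prop

def Sat (M : KModel) : Fml → M.W → (ℕ → M.Dom) → Prop
  | .verum, _, _ => True
  | .falsum, _, _ => False
  | .pvar q, w, _ => M.V w q
  | .pred P args, w, ρ => M.I w P (args.map ρ)
  | .neg A, w, ρ => ¬ Sat M A w ρ
  | .imp A B, w, ρ => Sat M A w ρ → Sat M B w ρ
  | .all u A, w, ρ => ∀ a ∈ M.D w, Sat M A w (Function.update ρ u a)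
  | .box A, w, ρ => ∀ v, M.R w v → Sat M A v ρ

/-- Validity in a model. -/
def MVal (M : KModel) (A : Fml) : Prop :=
  ∀ (w : M.W) (ρ : ℕ → M.Dom), (∀ x, ρ x ∈ M.D w) → Sat M A w ρ

/-- Validity on a frame. -/
def FVal (F : KFrame) (A : Fml) : Prop :=
  ∀ (I : F.W → ℕ → List F.Dom → Prop) (V : F.W → ℕ → Prop),
    MVal { toKFrame := F, I := I, V := V } A

/-- Smoryński's model. -/
def MS : KModel where
  W := ℕ
  R := fun m n => n < m
  Dom := ℕ
  D := fun n => {m | n ≤ m}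
  Dne := fun n => ⟨n, le_refl n⟩
  mono := by intro w w' h x hx; simp only [Set.mem_setOf_eq] at *; omega
  I := fun w P L => P = 0 ∧ ∀ m ∈ L, m ≠ w + 1
  V := fun _ _ => False

/-- The finite truncations of Smoryński's model. -/
def Mk (k : ℕ) : KModel where
  W := Fin (k + 1)
  R := fun m n => (n : ℕ) < (m : ℕ)
  Dom := ℕ
  D := fun n => {m | (n : ℕ) ≤ m ∧ m ≤ k + 2}
  Dne := fun n => ⟨(n : ℕ), by simp only [Set.mem_setOf_eq]; have := n.isLt; omega⟩
  mono := by intro w w' h x hx; simp only [Set.mem_setOf_eq] at *; omega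
  I := fun w P L => P = 0 ∧ ∀ m ∈ L, m ≠ (w : ℕ) + 1
  V := fun _ _ => False

/-- `A` contains only the unary predicate symbol `P` (coded `0`) and no propositional variables. -/
def OnlyP (A : Fml) : Prop := A.predSig ⊆ {(0, 1)} ∧ A.pvars = ∅

/-- The atomic formula `P(u)`. -/
def Pat (u : ℕ) : Fml := Fml.pred 0 [u]

/-- `h(F) ≤ n`: there is no chain of `n+1` successive `R`-steps. -/
def HeightLe (F : KFrame) (n : ℕ) : Prop :=
  ∀ c : ℕ → F.W, ¬ ∀ i < n + 1, F.R (c i) (c (i + 1))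

end PML

namespace PML
open Fml

/-- Rank of a formula. -/
def rk : Fml → ℕ
  | .verum => 1
  | .falsum => 1
  | .pvar _ => 1
  | .pred _ args => args.length + 1
  | .neg A => rk A + 1
  | .imp A B => rk A + rk B + 1
  | .all _ A => rk A + 1
  | .box A => rk A + 1

lemma free_card_le (A : Fml) : A.free.card ≤ rk A := by
  induction A with
  | verum => simp [Fml.free, rk]
  | falsum => simp [Fml.free, rk]
  | pvar q => simp [Fml.free, rk]
  | pred P args =>
      simp only [Fml.free, rk]
      exact le_trans args.toFinset_card_le (Nat.le_succ _)
  | neg A ih => simpa [Fml.free, rk] using le_trans ih (Nat.le_succ _)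
  | imp A B ihA ihB =>
      simp only [Fml.free, rk]
      calc (A.free ∪ B.free).card ≤ A.free.card + B.free.card := Finset.card_union_le _ _
        _ ≤ rk A + rk B + 1 := by omega
  | all u A ih =>
      simp only [Fml.free, rk]
      exact le_trans (Finset.card_le_card (Finset.erase_subset _ _)) (by omega)
  | box A ih => simpa [Fml.free, rk] using le_trans ih (Nat.le_succ _)

/-- Coincidence lemma. -/
lemma sat_coincide (M : KModel) (A : Fml) :
    ∀ (w : M.W) (ρ ρ' : ℕ → M.Dom), (∀ x ∈ A.free, ρ x = ρ' x) →
    (Sat M A w ρ ↔ Sat M A w ρ') := by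
  induction A with
  | verum => intro w ρ ρ' h; simp [Sat]
  | falsum => intro w ρ ρ' h; simp [Sat]
  | pvar q => intro w ρ ρ' h; simp [Sat]
  | pred P args =>
      intro w ρ ρ' h
      have : args.map ρ = args.map ρ' := by
        apply List.map_congr_left
        intro x hx
        exact h x (by simp [Fml.free, List.mem_toFinset, hx])
      simp [Sat, this]
  | neg A ih => intro w ρ ρ' h; simp only [Sat]; rw [ih w ρ ρ' h]
  | imp A B ihA ihB =>
      intro w ρ ρ' h
      simp only [Sat]
      rw [ihA w ρ ρ' (fun x hx => h x (by simp [Fml.free, hx])),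
          ihB w ρ ρ' (fun x hx => h x (by simp [Fml.free, hx]))]
  | all u A ih =>
      intro w ρ ρ' h
      simp only [Sat]
      apply forall_congr'; intro a
      apply imp_congr Iff.rfl
      apply ih
      intro x hx
      rcases eq_or_ne x u with rfl | hne
      · simp [Function.update]
      · simp only [Function.update, dif_neg hne]
        exact h x (by simp [Fml.free, Finset.mem_erase, hne, hx])
  | box A ih =>
      intro w ρ ρ' h
      simp only [Sat]
      exact forall_congr' fun v => imp_congr Iff.rfl (ih v ρ ρ' h)

end PML

namespace PML
open Fml

lemma onlyP_neg {A : Fml} (h : OnlyP A.neg) : OnlyP A := h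
lemma onlyP_box {A : Fml} (h : OnlyP A.box) : OnlyP A := h
lemma onlyP_all {u : ℕ} {A : Fml} (h : OnlyP (Fml.all u A)) : OnlyP A := h
lemma onlyP_imp {A B : Fml} (h : OnlyP (A.imp B)) : OnlyP A ∧ OnlyP B := by
  obtain ⟨h1, h2⟩ := h
  simp only [Fml.predSig, Fml.pvars, Finset.union_subset_iff, Finset.union_eq_empty] at h1 h2
  exact ⟨⟨h1.1, h2.1⟩, ⟨h1.2, h2.2⟩⟩

/-- Choice of a matching successor world. -/
lemma pickW (m v v' w' : ℕ) (h4 : min v (2*m+2) = min v' (2*m+2)) (hw' : w' < v') :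
    ∃ w, w < v ∧ min w (2*m) = min w' (2*m) ∧ min (v - w) 2 = min (v' - w') 2 := by
  by_cases h1 : w' + 1 = v'
  · exact ⟨v - 1, by omega, by omega, by omega⟩
  by_cases h2 : w' < 2*m
  · exact ⟨w', by omega, by omega, by omega⟩
  · exact ⟨v - 2, by omega, by omega, by omega⟩

/-- Choice of a matching domain element. -/
lemma pickD (k v v' a' : ℕ) (S : Finset ℕ) (ρ ρ' : ℕ → ℕ)
    (H1 : ∀ x ∈ S, v ≤ ρ x ∧ ρ x ≤ k + 2)
    (H1' : ∀ x ∈ S, v' ≤ ρ' x ∧ ρ' x ≤ k + 2)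
    (H2 : ∀ x ∈ S, min (ρ x - v) 2 = min (ρ' x - v') 2)
    (H3 : ∀ x ∈ S, ∀ y ∈ S, (ρ x = ρ y ↔ ρ' x = ρ' y))
    (hv : v + S.card < k + 1)
    (ha1 : v' ≤ a') (ha2 : a' ≤ k + 2) (hvk : v ≤ k) :
    ∃ a, v ≤ a ∧ a ≤ k + 2 ∧ min (a - v) 2 = min (a' - v') 2 ∧
      (∀ x ∈ S, (a = ρ x ↔ a' = ρ' x)) := by
  by_cases hex : ∃ x ∈ S, ρ' x = a'
  · obtain ⟨x, hx, hxa⟩ := hex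
    refine ⟨ρ x, (H1 x hx).1, (H1 x hx).2, by rw [← hxa]; exact H2 x hx, ?_⟩
    intro y hy
    rw [← hxa]
    constructor
    · intro h; exact ((H3 y hy x hx).1 h.symm).symm
    · intro h; exact ((H3 y hy x hx).2 h.symm).symm
  push_neg at hex
  rcases Nat.lt_or_ge (a' - v') 2 with ht | ht
  · -- a' = v' or v' + 1 : take a = v + (a' - v')
    refine ⟨v + (a' - v'), by omega, by omega, by omega, ?_⟩
    intro y hy
    have h2y := H2 y hy
    have h1y := H1 y hy
    have h1y' := H1' y hy
    constructor
    · intro h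
      exfalso
      exact hex y hy (by omega)
    · intro h
      exact absurd h.symm (hex y hy)
  · -- generic: pick fresh element in [v+2, k+2] avoiding ρ '' S
    have hcard : (S.image ρ).card < (Finset.Icc (v+2) (k+2)).card := by
      have := Finset.card_image_le (s := S) (f := ρ)
      rw [Nat.card_Icc]
      omega
    obtain ⟨a, ha, hafresh⟩ : ∃ a ∈ Finset.Icc (v+2) (k+2), a ∉ S.image ρ := by
      by_contra hc
      push_neg at hc
      exact absurd (Finset.card_le_card hc) (by omega)
    simp only [Finset.mem_Icc] at ha
    refine ⟨a, by omega, by omega, by omega, ?_⟩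
    intro y hy
    constructor
    · intro h
      subst h
      exact absurd (Finset.mem_image_of_mem ρ hy) hafresh
    · intro h
      exact absurd h.symm (hex y hy)

end PML

namespace PML
open Fml

lemma memD {k : ℕ} {w : Fin (k+1)} {a : ℕ} : a ∈ (Mk k).D w ↔ ((w:ℕ) ≤ a ∧ a ≤ k+2) :=
  Iff.rfl

lemma R_iff {k : ℕ} {w t : Fin (k+1)} : (Mk k).R w t ↔ (t:ℕ) < (w:ℕ) := Iff.rfl

lemma EF (k : ℕ) : ∀ (C : Fml) (v v' : Fin (k+1)) (ρ ρ' : ℕ → ℕ),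
    OnlyP C →
    (∀ x ∈ C.free, (v:ℕ) ≤ ρ x ∧ ρ x ≤ k+2) →
    (∀ x ∈ C.free, (v':ℕ) ≤ ρ' x ∧ ρ' x ≤ k+2) →
    (∀ x ∈ C.free, min (ρ x - (v:ℕ)) 2 = min (ρ' x - (v':ℕ)) 2) →
    (∀ x ∈ C.free, ∀ y ∈ C.free, (ρ x = ρ y ↔ ρ' x = ρ' y)) →
    min (v:ℕ) (2 * rk C) = min (v':ℕ) (2 * rk C) →
    (v:ℕ) + rk C ≤ k → (v':ℕ) + rk C ≤ k →
    (Sat (Mk k) C v ρ ↔ Sat (Mk k) C v' ρ') := by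
  intro C
  induction C with
  | verum => intros; simp [Sat]
  | falsum => intros; simp [Sat]
  | pvar q =>
      intro v v' ρ ρ' hC
      exfalso
      have := hC.2
      simp [Fml.pvars] at this
  | pred P args =>
      intro v v' ρ ρ' hC H1 H1' H2 H3 H4 H5 H5'
      have hmem : (P, args.length) ∈ ({(0,1)} : Finset (ℕ × ℕ)) :=
        hC.1 (by simp [Fml.predSig])
      simp only [Finset.mem_singleton, Prod.mk.injEq] at hmem
      obtain ⟨rfl, hlen⟩ := hmem
      obtain ⟨x, rfl⟩ := List.length_eq_one_iff.mp hlen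
      have hx : x ∈ (Fml.pred 0 [x]).free := by simp [Fml.free]
      have h1 := H1 x hx
      have h1' := H1' x hx
      have h2 := H2 x hx
      simp only [Sat, Mk, List.map, List.mem_singleton, forall_eq, List.mem_cons,
        List.not_mem_nil, or_false, true_and]
      constructor
      · intro h hc; omega
      · intro h hc; omega
  | neg A ih =>
      intro v v' ρ ρ' hC H1 H1' H2 H3 H4 H5 H5'
      simp only [Sat]
      rw [ih v v' ρ ρ' (onlyP_neg hC) H1 H1' H2 H3 (by simp [rk] at H4 ⊢; omega)
        (by simp [rk] at H5; omega) (by simp [rk] at H5'; omega)]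
  | imp A B ihA ihB =>
      intro v v' ρ ρ' hC H1 H1' H2 H3 H4 H5 H5'
      obtain ⟨hCA, hCB⟩ := onlyP_imp hC
      have hfA : ∀ x ∈ A.free, x ∈ (A.imp B).free := by intro x hx; simp [Fml.free, hx]
      have hfB : ∀ x ∈ B.free, x ∈ (A.imp B).free := by intro x hx; simp [Fml.free, hx]
      simp only [Sat]
      rw [ihA v v' ρ ρ' hCA (fun x hx => H1 x (hfA x hx)) (fun x hx => H1' x (hfA x hx))
            (fun x hx => H2 x (hfA x hx))
            (fun x hx y hy => H3 x (hfA x hx) y (hfA y hy))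
            (by simp [rk] at H4 ⊢; omega) (by simp [rk] at H5; omega)
            (by simp [rk] at H5'; omega),
          ihB v v' ρ ρ' hCB (fun x hx => H1 x (hfB x hx)) (fun x hx => H1' x (hfB x hx))
            (fun x hx => H2 x (hfB x hx))
            (fun x hx y hy => H3 x (hfB x hx) y (hfB y hy))
            (by simp [rk] at H4 ⊢; omega) (by simp [rk] at H5; omega)
            (by simp [rk] at H5'; omega)]
  | all u A ih =>
      intro v v' ρ ρ' hC H1 H1' H2 H3 H4 H5 H5'
      have hrk : rk (Fml.all u A) = rk A + 1 := rfl
      have hcard : ((Fml.all u A).free).card ≤ rk A + 1 := by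
        rw [← hrk]; exact free_card_le _
      have key : ∀ (w w' : Fin (k+1)) (σ σ' : ℕ → ℕ),
          (∀ x ∈ (Fml.all u A).free, (w:ℕ) ≤ σ x ∧ σ x ≤ k+2) →
          (∀ x ∈ (Fml.all u A).free, (w':ℕ) ≤ σ' x ∧ σ' x ≤ k+2) →
          (∀ x ∈ (Fml.all u A).free, min (σ x - (w:ℕ)) 2 = min (σ' x - (w':ℕ)) 2) →
          (∀ x ∈ (Fml.all u A).free, ∀ y ∈ (Fml.all u A).free, (σ x = σ y ↔ σ' x = σ' y)) →
          min (w:ℕ) (2 * rk (Fml.all u A)) = min (w':ℕ) (2 * rk (Fml.all u A)) →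
          (w:ℕ) + rk (Fml.all u A) ≤ k → (w':ℕ) + rk (Fml.all u A) ≤ k →
          Sat (Mk k) (Fml.all u A) w σ → Sat (Mk k) (Fml.all u A) w' σ' := by
        intro w w' σ σ' H1 H1' H2 H3 H4 H5 H5' hsat
        have hsat' : ∀ a : ℕ, ((w:ℕ) ≤ a ∧ a ≤ k+2) →
            Sat (Mk k) A w (Function.update σ u a) := hsat
        show ∀ a' : ℕ, ((w':ℕ) ≤ a' ∧ a' ≤ k+2) →
            Sat (Mk k) A w' (Function.update σ' u a')
        intro a' ha'
        obtain ⟨a, ha1, ha2, ha3, ha4⟩ := pickD k w w' a' ((Fml.all u A).free) σ σ'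
          H1 H1' H2 H3 (by rw [hrk] at H5; omega) ha'.1 ha'.2 (by omega)
        have hfree : ∀ x ∈ A.free, x ≠ u → x ∈ (Fml.all u A).free := by
          intro x hx hne; simp [Fml.free, Finset.mem_erase, hne, hx]
        have hupd : ∀ x, Function.update σ u a x = if x = u then a else σ x := by
          intro x; by_cases h : x = u <;> simp [Function.update, h]
        have hupd' : ∀ x, Function.update σ' u a' x = if x = u then a' else σ' x := by
          intro x; by_cases h : x = u <;> simp [Function.update, h]
        refine (ih w w' (Function.update σ u a) (Function.update σ' u a') (onlyP_all hC)
          ?_ ?_ ?_ ?_ ?_ ?_ ?_).mp ?_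
        rotate_right
        · exact hsat' a ⟨ha1, ha2⟩
        · intro x hx
          rw [hupd]
          by_cases h : x = u
          · simp only [if_pos h]; exact ⟨ha1, ha2⟩
          · simp only [if_neg h]; exact H1 x (hfree x hx h)
        · intro x hx
          rw [hupd']
          by_cases h : x = u
          · simp only [if_pos h]; exact ha'
          · simp only [if_neg h]; exact H1' x (hfree x hx h)
        · intro x hx
          rw [hupd, hupd']
          by_cases h : x = u
          · simp only [if_pos h]; exact ha3
          · simp only [if_neg h]; exact H2 x (hfree x hx h)
        · intro x hx y hy
          rw [hupd, hupd', hupd, hupd']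
          by_cases h : x = u <;> by_cases h' : y = u
          · simp [h, h']
          · simp only [if_pos h, if_neg h']; exact ha4 y (hfree y hy h')
          · simp only [if_neg h, if_pos h']
            constructor
            · intro he; exact (ha4 x (hfree x hx h)).1 he.symm |>.symm
            · intro he; exact ((ha4 x (hfree x hx h)).2 he.symm).symm
          · simp only [if_neg h, if_neg h']
            exact H3 x (hfree x hx h) y (hfree y hy h')
        · rw [hrk] at H4; omega
        · rw [hrk] at H5; omega
        · rw [hrk] at H5'; omega
      constructor
      · exact key v v' ρ ρ' H1 H1' H2 H3 H4 H5 H5'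
      · exact key v' v ρ' ρ H1' H1 (fun x hx => (H2 x hx).symm)
          (fun x hx y hy => (H3 x hx y hy).symm) H4.symm H5' H5
  | box A ih =>
      intro v v' ρ ρ' hC H1 H1' H2 H3 H4 H5 H5'
      have hrk : rk (Fml.box A) = rk A + 1 := rfl
      have key : ∀ (w w' : Fin (k+1)) (σ σ' : ℕ → ℕ),
          (∀ x ∈ A.free, (w:ℕ) ≤ σ x ∧ σ x ≤ k+2) →
          (∀ x ∈ A.free, (w':ℕ) ≤ σ' x ∧ σ' x ≤ k+2) →
          (∀ x ∈ A.free, min (σ x - (w:ℕ)) 2 = min (σ' x - (w':ℕ)) 2) →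
          (∀ x ∈ A.free, ∀ y ∈ A.free, (σ x = σ y ↔ σ' x = σ' y)) →
          min (w:ℕ) (2 * rk A + 2) = min (w':ℕ) (2 * rk A + 2) →
          (w:ℕ) + rk A + 1 ≤ k → (w':ℕ) + rk A + 1 ≤ k →
          Sat (Mk k) (Fml.box A) w σ → Sat (Mk k) (Fml.box A) w' σ' := by
        intro w w' σ σ' H1 H1' H2 H3 H4 H5 H5' hsat
        have hsat' : ∀ t : Fin (k+1), (t:ℕ) < (w:ℕ) → Sat (Mk k) A t σ := hsat
        show ∀ t' : Fin (k+1), (t':ℕ) < (w':ℕ) → Sat (Mk k) A t' σ'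
        intro t' ht'
        obtain ⟨t, htw, h4', hs⟩ := pickW (rk A) (w:ℕ) (w':ℕ) (t':ℕ) H4 ht'
        have htk : t < k + 1 := by omega
        have := hsat' ⟨t, htk⟩ (by simpa using htw)
        rw [ih ⟨t, htk⟩ t' σ σ' (onlyP_box hC) ?_ ?_ ?_ H3 ?_ ?_ ?_] at this
        · exact this
        · intro x hx
          have := H1 x hx
          simp only [Fin.val_mk]
          omega
        · intro x hx
          have := H1' x hx
          omega
        · intro x hx
          have h1 := H1 x hx
          have h1' := H1' x hx
          have h2 := H2 x hx
          simp only [Fin.val_mk]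
          omega
        · simpa using h4'
        · simp only [Fin.val_mk]; omega
        · omega
      simp only [hrk, Nat.mul_add, Nat.mul_one] at H4 H5 H5'
      constructor
      · exact key v v' ρ ρ' H1 H1' H2 H3 H4 (by omega) (by omega)
      · exact key v' v ρ' ρ H1' H1 (fun x hx => (H2 x hx).symm)
          (fun x hx y hy => (H3 x hx y hy).symm) H4.symm (by omega) (by omega)

end PML

namespace PML
open Fml

lemma satPat (k : ℕ) (w : Fin (k+1)) (σ : ℕ → ℕ) :
    Sat (Mk k) (Pat 0) w σ ↔ σ 0 ≠ (w:ℕ) + 1 := by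
  simp [Pat, Sat, Mk]

end PML

open PML PML.Fml in
/-- failure of the fixed-point property for FIFD; for every sentence B in P
only, some truncated Smoryński model M_k (a model on an FIFD frame) refutes
B ↔ ∀u □(B → P(u)). -/
theorem stmt15 (B : Fml) (hB : OnlyP B) (hsent : B.free = ∅) :
    ∃ k : ℕ, ¬ MVal (Mk k) (B.iff (Fml.all 0 ((B.imp (Pat 0)).box))) := by
  set r := rk B with hr
  refine ⟨4 * r + 8, fun h => ?_⟩
  set k := 4 * r + 8 with hk
  set ρ₀ : ℕ → ℕ := fun _ => k + 2 with hρ₀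
  set T : Fin (k+1) → Prop := fun n => Sat (Mk k) B n ρ₀ with hT
  have hadm : ∀ n : Fin (k+1), ∀ x : ℕ, ρ₀ x ∈ (Mk k).D n := by
    intro n x
    have := n.isLt
    refine ⟨?_, ?_⟩ <;> simp only [hρ₀] <;> omega
  have hiff : ∀ n : Fin (k+1),
      T n ↔ Sat (Mk k) (Fml.all 0 ((B.imp (Pat 0)).box)) n ρ₀ := by
    intro n
    have := h n ρ₀ (hadm n)
    simp only [Fml.iff, Fml.land, Sat] at this
    tauto
  have hBw : ∀ (w : Fin (k+1)) (a : ℕ),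
      Sat (Mk k) B w (Function.update ρ₀ 0 a) ↔ T w := by
    intro w a
    exact sat_coincide (Mk k) B w _ ρ₀ (by simp [hsent])
  have hAllIff : ∀ (n : Fin (k+1)), Sat (Mk k) (Fml.all 0 ((B.imp (Pat 0)).box)) n ρ₀ ↔
      (∀ a : ℕ, ((n:ℕ) ≤ a ∧ a ≤ k+2) → ∀ w : Fin (k+1), (w:ℕ) < (n:ℕ) →
        (Sat (Mk k) B w (Function.update ρ₀ 0 a) →
          Sat (Mk k) (Pat 0) w (Function.update ρ₀ 0 a))) := fun n => Iff.rfl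
  have hA : ∀ n : Fin (k+1), T n ↔
      (∀ a : ℕ, (n:ℕ) ≤ a → a ≤ k+2 → ∀ w : Fin (k+1), (w:ℕ) < (n:ℕ) →
        T w → a ≠ (w:ℕ) + 1) := by
    intro n
    rw [hiff n, hAllIff n]
    constructor
    · intro hs a ha1 ha2 w hw hTw
      have := hs a ⟨ha1, ha2⟩ w hw ((hBw w a).mpr hTw)
      replace this := (satPat k w _).mp this
      exact this
    · intro hs a ha w hw hB'
      refine (satPat k w _).mpr ?_
      show a ≠ (w:ℕ) + 1
      exact hs a ha.1 ha.2 w hw ((hBw w a).mp hB')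
  have step : ∀ n : Fin (k+1), (hn : 1 ≤ (n:ℕ)) →
      (T n ↔ ¬ T ⟨(n:ℕ) - 1, by omega⟩) := by
    intro n hn
    rw [hA n]
    constructor
    · intro hs hTm
      have := hs (n:ℕ) le_rfl (by have := n.isLt; omega) ⟨(n:ℕ)-1, by omega⟩
        (by show (n:ℕ) - 1 < n; omega) hTm
      simp only [Fin.val_mk] at this
      omega
    · intro hd a ha1 ha2 w hw hTw heq
      have hweq : w = ⟨(n:ℕ)-1, by omega⟩ := Fin.ext (by simp; omega)
      rw [hweq] at hTw
      exact hd hTw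
  have base : T ⟨0, by omega⟩ := by
    rw [hA ⟨0, by omega⟩]
    intro a ha1 ha2 w hw
    simp at hw
  have par : ∀ m : ℕ, ∀ hm : m < k + 1, (T ⟨m, hm⟩ ↔ Even m) := by
    intro m
    induction m using Nat.strong_induction_on with
    | _ m IH =>
      intro hm
      match m, hm with
      | 0, hm => simpa using base
      | j + 1, hm =>
        rw [step ⟨j+1, hm⟩ (by show 1 ≤ j + 1; omega)]
        rw [Nat.even_add_one]
        exact not_congr (IH j (by omega) (by omega))
  have hEF : T ⟨2*r, by omega⟩ ↔ T ⟨2*r+1, by omega⟩ := by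
    apply EF k B ⟨2*r, by omega⟩ ⟨2*r+1, by omega⟩ ρ₀ ρ₀ hB
    · simp [hsent]
    · simp [hsent]
    · simp [hsent]
    · simp [hsent]
    · simp only [Fin.val_mk]; omega
    · simp only [Fin.val_mk]; omega
    · simp only [Fin.val_mk]; omega
  have hpar : Even (2*r) ↔ Even (2*r+1) := by
    exact ((par (2*r) (by omega)).symm.trans hEF).trans (par (2*r+1) (by omega))
  rw [Nat.even_iff, Nat.even_iff] at hpar
  omega
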